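/- A connected graph G of order n is recursively partitionable if and only if G ≅ K_1, or for every pair of positive integers a, b with a+b = n there is a partition {A,B} of V(G) with |A| = a, |B| = b, and both G[A] and G[B] recursively partitionable. -/

import Mathlib

open Finset

/-- `G.IsRP A` : the subgraph of `G` induced by the vertex set `A` is recursively
partitionable (RP): either `|A| = 1`, or `G[A]` is connected and for every integer partition
`a₁, …, a_k` (with `k ≥ 2`) of `|A|` there is a partition of `A` into parts of exactly these
sizes, each of which again induces an RP subgraph.  (The guard `B.card < A.card` is
automatically satisfied by every part of such a partition; it is only needed for
well-foundedness of the recursion.) -/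
def SimpleGraph.IsRP {V : Type} [DecidableEq V] (G : SimpleGraph V) (A : Finset V) : Prop :=
  A.card = 1 ∨ ((G.induce (A : Set V)).Connected ∧
    ∀ l : List ℕ, (∀ a ∈ l, 0 < a) → 2 ≤ l.length → l.sum = A.card →
      ∃ P : List (Finset V), P.map Finset.card = l ∧ P.Pairwise _root_.Disjoint ∧
        P.foldr (· ∪ ·) ∅ = A ∧ ∀ B ∈ P, ∀ _ : B.card < A.card, G.IsRP B)
termination_by A.card

lemma subset_foldr_union {V : Type} [DecidableEq V] {P : List (Finset V)} {B : Finset V}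
    (h : B ∈ P) : B ⊆ P.foldr (· ∪ ·) ∅ := by
  induction P with
  | nil => simp at h
  | cons C Q ih =>
    rcases List.mem_cons.mp h with rfl | h
    · exact Finset.subset_union_left
    · exact (ih h).trans Finset.subset_union_right

lemma mem_lt_sum' {t : List ℕ} (hpos : ∀ x ∈ t, 0 < x) (hlen : 2 ≤ t.length)
    {c : ℕ} (hc : c ∈ t) : c < t.sum := by
  obtain ⟨t1, t2, rfl⟩ := List.append_of_mem hc
  rw [List.sum_append, List.sum_cons]
  rcases t1 with _ | ⟨x, t1⟩
  · have ht2 : t2 ≠ [] := by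
      rintro rfl; simp at hlen
    have h2 : 0 < t2.sum :=
      List.sum_pos t2 (fun x hx => hpos x (by simp [hx])) ht2
    simp only [List.sum_nil, Nat.zero_add]
    omega
  · have hx : 0 < x := hpos x (by simp)
    have : 0 < (x :: t1).sum := by simp [List.sum_cons]; omega
    omega

lemma length_le_sum' {t : List ℕ} (hpos : ∀ x ∈ t, 0 < x) : t.length ≤ t.sum := by
  induction t with
  | nil => simp
  | cons x t ih =>
    have hx : 0 < x := hpos x (by simp)
    have := ih (fun y hy => hpos y (by simp [hy]))
    simp only [List.length_cons, List.sum_cons]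
    omega

/-- A connected graph `G` of order `n` is recursively partitionable if and only if `G ≅ K₁`
(i.e. `n = 1`), or for every pair of positive integers `a, b` with `a + b = n` there is a
partition `{A, B}` of the vertex set with `|A| = a`, `|B| = b` such that both induced
subgraphs are recursively partitionable. -/
theorem isRP_iff_binary {V : Type} [Fintype V] [DecidableEq V]
    (G : SimpleGraph V) (hG : G.Connected) :
    G.IsRP Finset.univ ↔
      (Fintype.card V = 1 ∨
        ∀ a b : ℕ, 0 < a → 0 < b → a + b = Fintype.card V →
          ∃ A : Finset V, A.card = a ∧ Aᶜ.card = b ∧ G.IsRP A ∧ G.IsRP Aᶜ) := by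
  constructor
  · intro h
    rw [SimpleGraph.IsRP] at h
    rcases h with h1 | ⟨_, hpart⟩
    · left; simpa [Finset.card_univ] using h1
    · right
      intro a b ha hb hab
      obtain ⟨P, hmap, hdisj, hunion, hRP⟩ := hpart [a, b]
        (by intro x hx; simp only [List.mem_cons, List.mem_singleton] at hx
            rcases hx with rfl | rfl | h; exacts [ha, hb, absurd h List.not_mem_nil])
        (by simp)
        (by simp [Finset.card_univ, hab])
      rcases P with _ | ⟨A, P⟩; · simp at hmap
      rcases P with _ | ⟨B, P⟩; · simp at hmap
      rcases P with _ | ⟨C, P⟩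
      swap; · simp at hmap
      simp only [List.map_cons, List.map_nil, List.cons.injEq, and_true] at hmap
      obtain ⟨hA, hB⟩ := hmap
      have hdAB : Disjoint A B := by
        have := (List.pairwise_cons.mp hdisj).1
        exact this B (by simp)
      have huAB : A ∪ B = Finset.univ := by simpa using hunion
      have hcompl : B = Aᶜ := by
        have : IsCompl A B := ⟨hdAB, codisjoint_iff.mpr (by simpa using huAB)⟩
        simpa using this.symm.eq_compl
      have hAlt : A.card < (Finset.univ : Finset V).card := by
        rw [hA, Finset.card_univ]; omega
      have hBlt : B.card < (Finset.univ : Finset V).card := by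
        rw [hB, Finset.card_univ]; omega
      refine ⟨A, hA, ?_, hRP A (by simp) hAlt, ?_⟩
      · rw [← hcompl]; exact hB
      · rw [← hcompl]; exact hRP B (by simp) hBlt
  · intro h
    rcases h with h1 | H
    · rw [SimpleGraph.IsRP]; left; simpa [Finset.card_univ] using h1
    · rw [SimpleGraph.IsRP]; right
      constructor
      · rw [Finset.coe_univ]
        exact (SimpleGraph.induceUnivIso G).connected_iff.mpr hG
      · intro l hpos hlen hsum
        rcases l with _ | ⟨a, t⟩
        · simp at hlen
        have ha : 0 < a := hpos a (by simp)
        have htpos : ∀ x ∈ t, 0 < x := fun x hx => hpos x (by simp [hx])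
        have htne : t ≠ [] := by rintro rfl; simp at hlen
        have hb : 0 < t.sum := List.sum_pos t htpos htne
        have hab : a + t.sum = Fintype.card V := by
          simpa [Finset.card_univ, List.sum_cons] using hsum
        obtain ⟨A, hAcard, hAccard, hARP, hAcRP⟩ := H a t.sum ha hb hab
        by_cases ht1 : t.length = 1
        · obtain ⟨b0, rfl⟩ := List.length_eq_one_iff.mp ht1
          refine ⟨[A, Aᶜ], ?_, ?_, ?_, ?_⟩
          · simp [hAcard, hAccard]
          · simp [List.pairwise_cons, disjoint_compl_right]
          · simp [Finset.union_compl]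
          · intro B hB _
            rcases List.mem_cons.mp hB with rfl | hB
            · exact hARP
            rcases List.mem_cons.mp hB with rfl | hB
            · exact hAcRP
            · exact absurd hB List.not_mem_nil
        · have ht2 : 2 ≤ t.length := by
            have h0 : 0 < t.length := List.length_pos_iff.mpr htne
            omega
          have hsum2 : 2 ≤ t.sum := le_trans ht2 (length_le_sum' htpos)
          rw [SimpleGraph.IsRP] at hAcRP
          rcases hAcRP with h1 | ⟨_, hp⟩
          · omega
          obtain ⟨P', hmap', hdisj', hunion', hRP'⟩ :=
            hp t htpos ht2 (by rw [hAccard])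
          refine ⟨A :: P', ?_, ?_, ?_, ?_⟩
          · simp [hmap', hAcard]
          · refine List.pairwise_cons.mpr ⟨?_, hdisj'⟩
            intro B hB
            have hsub : B ⊆ Aᶜ := hunion' ▸ subset_foldr_union hB
            exact disjoint_compl_right.mono_right hsub
          · simp [hunion', Finset.union_compl]
          · intro B hB _
            rcases List.mem_cons.mp hB with rfl | hB
            · exact hARP
            · have hmem : B.card ∈ t := by
                rw [← hmap']; exact List.mem_map_of_mem (f := Finset.card) hB
              have : B.card < Aᶜ.card := by
                rw [hAccard]; exact mem_lt_sum' htpos ht2 hmem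
              exact hRP' B hB this
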